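/- Every almost complex structure J on the solvable Lie algebra g with basis e₁,…,e_{2n} and brackets [eᵢ, e_{2n}] = eᵢ (1 ≤ i ≤ 2n-1) has vanishing Nijenhuis tensor: N(X,Y) = 0 for all X, Y ∈ g. -/

import Mathlib

/-- Every almost complex structure on the solvable Lie algebra with basis
`e 0, …, e (2n-1)` and only nonzero brackets `⁅e i, e (2n-1)⁆ = e i` (`i < 2n-1`)
has vanishing Nijenhuis tensor. -/
theorem solvable_integrable (n : ℕ) (hn : 1 ≤ n) (L : Type) [LieRing L] [LieAlgebra ℝ L]
    (e : Module.Basis (Fin (2 * n)) ℝ L)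
    (hbr : ∀ i j : Fin (2 * n), ⁅e i, e j⁆ =
      if hij : i.val < 2 * n - 1 ∧ j.val = 2 * n - 1 then e i
      else if hji : j.val < 2 * n - 1 ∧ i.val = 2 * n - 1 then -e j
      else 0)
    (J : L →ₗ[ℝ] L) (hJ : ∀ x, J (J x) = -x) :
    ∀ x y : L, ⁅x, y⁆ + J ⁅J x, y⁆ + J ⁅x, J y⁆ - ⁅J x, J y⁆ = 0 := by
  have hm : 2 * n - 1 < 2 * n := by omega
  set m : Fin (2 * n) := ⟨2 * n - 1, hm⟩ with hmdef
  set φ : L →ₗ[ℝ] ℝ := e.coord m with hφdef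
  have hφe : ∀ k : Fin (2 * n), φ (e k) = if k = m then 1 else 0 := by
    intro k
    simp [hφdef, Module.Basis.coord_apply, Module.Basis.repr_self, Finsupp.single_apply]
  -- the bilinear map measuring the failure of the bracket formula
  set F : L →ₗ[ℝ] L →ₗ[ℝ] L :=
    LinearMap.mk₂ ℝ (fun x y => ⁅x, y⁆ - (φ y • x - φ x • y))
      (by intro a b y; simp [add_lie]; module)
      (by intro c a y; simp [smul_lie, smul_smul]; module)
      (by intro x a b; simp [lie_add]; module)
      (by intro c x a; simp [lie_smul, smul_smul]; module)
    with hFdef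
  have hF : F = 0 := by
    apply e.ext
    intro i
    apply e.ext
    intro j
    have : F (e i) (e j) = ⁅e i, e j⁆ - (φ (e j) • e i - φ (e i) • e j) := rfl
    rw [LinearMap.zero_apply, LinearMap.zero_apply, this, hbr, hφe, hφe]
    by_cases hi : i = m
    · by_cases hj : j = m
      · subst hi; subst hj
        have : ¬ ((m : Fin (2*n)).val < 2 * n - 1 ∧ (m : Fin (2*n)).val = 2 * n - 1) := by
          simp [hmdef]
        simp [this]
      · have hjv : j.val < 2 * n - 1 := by
          have := j.isLt
          have : j.val ≠ 2 * n - 1 := fun h => hj (Fin.ext (by simp [hmdef, h]))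
          omega
        subst hi
        have h1 : ¬ ((m : Fin (2*n)).val < 2 * n - 1 ∧ j.val = 2 * n - 1) := by
          simp [hmdef]
        have h2 : (j.val < 2 * n - 1 ∧ (m : Fin (2*n)).val = 2 * n - 1) := by
          exact ⟨hjv, rfl⟩
        simp [h1, h2, hj]
    · have hiv : i.val < 2 * n - 1 := by
        have := i.isLt
        have : i.val ≠ 2 * n - 1 := fun h => hi (Fin.ext (by simp [hmdef, h]))
        omega
      by_cases hj : j = m
      · subst hj
        have h1 : (i.val < 2 * n - 1 ∧ (m : Fin (2*n)).val = 2 * n - 1) := ⟨hiv, rfl⟩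
        simp [h1, hi]
      · have hjv : j.val < 2 * n - 1 := by
          have := j.isLt
          have : j.val ≠ 2 * n - 1 := fun h => hj (Fin.ext (by simp [hmdef, h]))
          omega
        have h1 : ¬ (i.val < 2 * n - 1 ∧ j.val = 2 * n - 1) := by
          intro h; omega
        have h2 : ¬ (j.val < 2 * n - 1 ∧ i.val = 2 * n - 1) := by
          intro h; omega
        simp [h1, h2, hi, hj]
  have key : ∀ x y : L, ⁅x, y⁆ = φ y • x - φ x • y := by
    intro x y
    have := congrFun (congrArg DFunLike.coe (congrFun (congrArg DFunLike.coe hF) x)) y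
    simpa [hFdef, sub_eq_zero] using this
  intro x y
  rw [key x y, key (J x) y, key x (J y), key (J x) (J y)]
  simp only [map_sub, map_smul, hJ]
  module
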